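/- arXiv:1004.2759 — 2 statements merged into one kernel-verified Lean document; each statement's English description precedes it below -/
import Mathlib

section
/- For every natural number n and every k with 2k < n, the restriction of the up operator U to V(B(n)_k) is injective as a map into V(B(n)_{k+1}). -/
/-- `V n` is the complex vector space with basis `B(n)`, the set of all
subsets of `[n] = {1, …, n}` (modeled as `Finset (Fin n)`). -/
abbrev V (n : ℕ) : Type := Finset (Fin n) →₀ ℂ

/-- `V(B(n)_k)`: the span of the `k`-subsets of `[n]`, i.e. the elements of
`V n` supported on subsets of cardinality `k`. -/
noncomputable def rankSubmodule (n k : ℕ) : Submodule ℂ (V n) :=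
  Finsupp.supported ℂ ℂ {X : Finset (Fin n) | X.card = k}

/-- The up operator `U : V(B(n)) → V(B(n))`, defined on a basis element `X` by
`U(X) = Σ_Y Y`, the sum over all `Y ⊆ [n]` with `X ⊆ Y` and `|Y| = |X| + 1`. -/
noncomputable def upMap (n : ℕ) : V n →ₗ[ℂ] V n :=
  Finsupp.lift (V n) ℂ (Finset (Fin n)) fun X =>
    ∑ Y ∈ Finset.univ.filter (fun Y : Finset (Fin n) => X ⊆ Y ∧ Y.card = X.card + 1),
      Finsupp.single Y (1 : ℂ)

/-- `IsSJC n k h v` : `(v 0, v 1, …, v (h-1))` is a symmetric Jordan chain in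
`V(B(n))`: a sequence of `h ≥ 1` nonzero homogeneous elements, `v i` of rank
`k + i`, with `U (v i) = v (i+1)`, `U (v (h-1)) = 0`, and the symmetry condition
`r(v_1) + r(v_h) = n` (which for `h = 1` reads `2 r(v_1) = n`). -/
def IsSJC (n k h : ℕ) (v : ℕ → V n) : Prop :=
  1 ≤ h ∧
  (∀ i < h, v i ≠ 0 ∧ v i ∈ rankSubmodule n (k + i)) ∧
  (∀ i, i + 1 < h → upMap n (v i) = v (i + 1)) ∧
  upMap n (v (h - 1)) = 0 ∧
  k + (k + (h - 1)) = n

/-- The inclusion `V(B(n)) ≃ V(0) ⊆ V(B(n+1))` induced by regarding a subset of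
`[n]` as a subset of `[n+1]` not containing `n+1`. -/
noncomputable def inclMap (n : ℕ) : V n →ₗ[ℂ] V (n + 1) :=
  Finsupp.lmapDomain ℂ ℂ (fun X : Finset (Fin n) =>
    X.map ⟨Fin.castSucc, Fin.castSucc_injective n⟩)

/-- The map `R : V(0) → V(B(n+1))`, `R(v) = v̄`, induced by
`X ↦ X ∪ {n+1}` for `X ⊆ [n]` (here `V(0) ≅ V(B(n))`). -/
noncomputable def barMap (n : ℕ) : V n →ₗ[ℂ] V (n + 1) :=
  Finsupp.lmapDomain ℂ ℂ (fun X : Finset (Fin n) =>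
    insert (Fin.last n) (X.map ⟨Fin.castSucc, Fin.castSucc_injective n⟩))

section Aux
open Finset

lemma count1 (n : ℕ) (X : Finset (Fin n)) :
    (univ.filter (fun Y : Finset (Fin n) => X ⊆ Y ∧ Y.card = X.card + 1)).card = n - X.card := by
  have himg : univ.filter (fun Y : Finset (Fin n) => X ⊆ Y ∧ Y.card = X.card + 1)
      = Xᶜ.image (fun a => insert a X) := by
    ext Y
    simp only [mem_filter, mem_univ, true_and, mem_image, mem_compl]
    constructor
    · rintro ⟨hXY, hc⟩
      have h1 : (Y \ X).card = 1 := by rw [Finset.card_sdiff_of_subset hXY]; omega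
      obtain ⟨a, ha⟩ := Finset.card_eq_one.1 h1
      have haY : a ∈ Y \ X := ha ▸ Finset.mem_singleton_self a
      rw [Finset.mem_sdiff] at haY
      refine ⟨a, haY.2, ?_⟩
      apply Finset.eq_of_subset_of_card_le (Finset.insert_subset haY.1 hXY)
      rw [Finset.card_insert_of_notMem haY.2]; omega
    · rintro ⟨a, ha, rfl⟩
      exact ⟨Finset.subset_insert a X, Finset.card_insert_of_notMem ha⟩
  rw [himg, Finset.card_image_of_injOn, Finset.card_compl, Fintype.card_fin]
  intro a ha b hb hab
  simp only [coe_compl, Set.mem_compl_iff, mem_coe] at ha hb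
  simp only [] at hab
  have : a ∈ insert b X := hab ▸ Finset.mem_insert_self a X
  rcases Finset.mem_insert.1 this with h | h
  · exact h
  · exact absurd h ha

lemma count2 (n : ℕ) (X : Finset (Fin n)) :
    (univ.filter (fun W : Finset (Fin n) => W ⊆ X ∧ W.card + 1 = X.card)).card = X.card := by
  have himg : univ.filter (fun W : Finset (Fin n) => W ⊆ X ∧ W.card + 1 = X.card)
      = X.image (fun a => X.erase a) := by
    ext W
    simp only [mem_filter, mem_univ, true_and, mem_image]
    constructor
    · rintro ⟨hWX, hc⟩
      have hle : W.card ≤ X.card := Finset.card_le_card hWX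
      have h1 : (X \ W).card = 1 := by rw [Finset.card_sdiff_of_subset hWX]; omega
      obtain ⟨a, ha⟩ := Finset.card_eq_one.1 h1
      have haX : a ∈ X \ W := ha ▸ Finset.mem_singleton_self a
      rw [Finset.mem_sdiff] at haX
      refine ⟨a, haX.1, ?_⟩
      have hsub : W ⊆ X.erase a := fun w hw =>
        Finset.mem_erase.2 ⟨fun h => haX.2 (h ▸ hw), hWX hw⟩
      exact (Finset.eq_of_subset_of_card_le hsub
        (by rw [Finset.card_erase_of_mem haX.1]; omega)).symm
    · rintro ⟨a, ha, rfl⟩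
      exact ⟨Finset.erase_subset a X, by have h0 : 0 < X.card := Finset.card_pos.2 ⟨a, ha⟩; rw [Finset.card_erase_of_mem ha]; omega⟩
  rw [himg, Finset.card_image_of_injOn]
  intro a ha b hb hab
  simp only [mem_coe] at ha hb
  by_contra hne
  have : a ∈ X.erase b := Finset.mem_erase.2 ⟨hne, ha⟩
  simp only [] at hab
  rw [← hab] at this
  exact (Finset.mem_erase.1 this).1 rfl


lemma key (n : ℕ) (X Z : Finset (Fin n)) :
    ((univ.filter (fun Y : Finset (Fin n) =>
        (X ⊆ Y ∧ Y.card = X.card + 1) ∧ Z ⊆ Y ∧ Z.card + 1 = Y.card)).card : ℂ)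
    = ((univ.filter (fun W : Finset (Fin n) =>
        (W ⊆ X ∧ W.card + 1 = X.card) ∧ W ⊆ Z ∧ Z.card = W.card + 1)).card : ℂ)
      + ((n : ℂ) - 2 * X.card) * (if X = Z then 1 else 0) := by
  by_cases hXZ : X = Z
  · subst hXZ
    have h1 : univ.filter (fun Y : Finset (Fin n) =>
        (X ⊆ Y ∧ Y.card = X.card + 1) ∧ X ⊆ Y ∧ X.card + 1 = Y.card)
        = univ.filter (fun Y : Finset (Fin n) => X ⊆ Y ∧ Y.card = X.card + 1) := by
      apply Finset.filter_congr; intro Y _; constructor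
      · rintro ⟨h, _⟩; exact h
      · rintro ⟨h1, h2⟩; exact ⟨⟨h1, h2⟩, h1, h2.symm⟩
    have h2 : univ.filter (fun W : Finset (Fin n) =>
        (W ⊆ X ∧ W.card + 1 = X.card) ∧ W ⊆ X ∧ X.card = W.card + 1)
        = univ.filter (fun W : Finset (Fin n) => W ⊆ X ∧ W.card + 1 = X.card) := by
      apply Finset.filter_congr; intro W _; constructor
      · rintro ⟨h, _⟩; exact h
      · rintro ⟨h1, h2⟩; exact ⟨⟨h1, h2⟩, h1, h2.symm⟩
    rw [h1, h2, count1, count2, if_pos rfl]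
    have hle : X.card ≤ n := by simpa using X.card_le_univ
    push_cast [Nat.cast_sub hle]
    ring
  · rw [if_neg hXZ, mul_zero, add_zero]
    norm_cast
    by_cases hcard : Z.card = X.card
    · have hZnX : ¬ Z ⊆ X := fun h => hXZ ((Finset.eq_of_subset_of_card_le h (by omega)).symm)
      have hne : X ∪ Z ≠ X := fun h => hZnX (by rw [← h]; exact Finset.subset_union_right)
      have hss : X ⊂ X ∪ Z := Finset.ssubset_iff_subset_ne.2 ⟨Finset.subset_union_left, hne.symm⟩
      have hlt : X.card < (X ∪ Z).card := Finset.card_lt_card hss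
      have hie : (X ∩ Z).card + (X ∪ Z).card = X.card + Z.card :=
        Finset.card_inter_add_card_union X Z
      by_cases hU : (X ∪ Z).card = X.card + 1
      · have hDU : univ.filter (fun Y : Finset (Fin n) =>
            (X ⊆ Y ∧ Y.card = X.card + 1) ∧ Z ⊆ Y ∧ Z.card + 1 = Y.card) = {X ∪ Z} := by
          ext Y
          simp only [mem_filter, mem_univ, true_and, mem_singleton]
          constructor
          · rintro ⟨⟨hXY, hYc⟩, hZY, _⟩
            exact (Finset.eq_of_subset_of_card_le (Finset.union_subset hXY hZY)
              (by omega)).symm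
          · rintro rfl
            exact ⟨⟨Finset.subset_union_left, hU⟩, Finset.subset_union_right, by omega⟩
        have hUD : univ.filter (fun W : Finset (Fin n) =>
            (W ⊆ X ∧ W.card + 1 = X.card) ∧ W ⊆ Z ∧ Z.card = W.card + 1) = {X ∩ Z} := by
          ext W
          simp only [mem_filter, mem_univ, true_and, mem_singleton]
          constructor
          · rintro ⟨⟨hWX, hWc⟩, hWZ, _⟩
            exact Finset.eq_of_subset_of_card_le (Finset.subset_inter hWX hWZ) (by omega)
          · rintro rfl
            have h1 : (X ∩ Z).card + 1 = X.card := by omega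
            exact ⟨⟨Finset.inter_subset_left, h1⟩, Finset.inter_subset_right, by omega⟩
        rw [hDU, hUD]; simp
      · have h2 : X.card + 2 ≤ (X ∪ Z).card := by omega
        have hDU : univ.filter (fun Y : Finset (Fin n) =>
            (X ⊆ Y ∧ Y.card = X.card + 1) ∧ Z ⊆ Y ∧ Z.card + 1 = Y.card) = ∅ := by
          apply Finset.filter_eq_empty_iff.2
          rintro Y _ ⟨⟨hXY, hYc⟩, hZY, _⟩
          have := Finset.card_le_card (Finset.union_subset hXY hZY)
          omega
        have hUD : univ.filter (fun W : Finset (Fin n) =>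
            (W ⊆ X ∧ W.card + 1 = X.card) ∧ W ⊆ Z ∧ Z.card = W.card + 1) = ∅ := by
          apply Finset.filter_eq_empty_iff.2
          rintro W _ ⟨⟨hWX, hWc⟩, hWZ, _⟩
          have := Finset.card_le_card (Finset.subset_inter hWX hWZ)
          omega
        rw [hDU, hUD]
    · have hDU : univ.filter (fun Y : Finset (Fin n) =>
          (X ⊆ Y ∧ Y.card = X.card + 1) ∧ Z ⊆ Y ∧ Z.card + 1 = Y.card) = ∅ := by
        apply Finset.filter_eq_empty_iff.2
        rintro Y _ ⟨⟨_, h1⟩, _, h2⟩; omega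
      have hUD : univ.filter (fun W : Finset (Fin n) =>
          (W ⊆ X ∧ W.card + 1 = X.card) ∧ W ⊆ Z ∧ Z.card = W.card + 1) = ∅ := by
        apply Finset.filter_eq_empty_iff.2
        rintro W _ ⟨⟨_, h1⟩, _, h2⟩; omega
      rw [hDU, hUD]


noncomputable def downMap (n : ℕ) : V n →ₗ[ℂ] V n :=
  Finsupp.lift (V n) ℂ (Finset (Fin n)) fun X =>
    ∑ Y ∈ Finset.univ.filter (fun Y : Finset (Fin n) => Y ⊆ X ∧ Y.card + 1 = X.card),
      Finsupp.single Y (1 : ℂ)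

lemma up_single (n : ℕ) (X : Finset (Fin n)) : upMap n (Finsupp.single X (1:ℂ)) =
    ∑ Y ∈ Finset.univ.filter (fun Y : Finset (Fin n) => X ⊆ Y ∧ Y.card = X.card + 1),
      Finsupp.single Y (1 : ℂ) := by
  simp [upMap, Finsupp.lift_apply, Finsupp.sum_single_index]

lemma down_single (n : ℕ) (X : Finset (Fin n)) : downMap n (Finsupp.single X (1:ℂ)) =
    ∑ Y ∈ Finset.univ.filter (fun Y : Finset (Fin n) => Y ⊆ X ∧ Y.card + 1 = X.card),
      Finsupp.single Y (1 : ℂ) := by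
  simp [downMap, Finsupp.lift_apply, Finsupp.sum_single_index]

lemma sum_single_apply (n : ℕ) (s : Finset (Finset (Fin n))) (Z : Finset (Fin n)) :
    (∑ Y ∈ s, Finsupp.single Y (1:ℂ)) Z = if Z ∈ s then 1 else 0 := by
  rw [Finsupp.finset_sum_apply]
  simp only [Finsupp.single_apply]
  rw [Finset.sum_ite_eq' s Z (fun _ => (1:ℂ))]

lemma down_apply_sum (n : ℕ) (s : Finset (Finset (Fin n))) (Z : Finset (Fin n)) :
    (downMap n (∑ Y ∈ s, Finsupp.single Y (1:ℂ))) Z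
      = ((s.filter (fun Y => Z ⊆ Y ∧ Z.card + 1 = Y.card)).card : ℂ) := by
  rw [map_sum, Finsupp.finset_sum_apply, ← Finset.sum_boole]
  apply Finset.sum_congr rfl
  intro Y _
  rw [down_single, sum_single_apply]
  simp only [Finset.mem_filter, Finset.mem_univ, true_and]

lemma up_apply_sum (n : ℕ) (s : Finset (Finset (Fin n))) (Z : Finset (Fin n)) :
    (upMap n (∑ W ∈ s, Finsupp.single W (1:ℂ))) Z
      = ((s.filter (fun W => W ⊆ Z ∧ Z.card = W.card + 1)).card : ℂ) := by
  rw [map_sum, Finsupp.finset_sum_apply, ← Finset.sum_boole]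
  apply Finset.sum_congr rfl
  intro W _
  rw [up_single, sum_single_apply]
  simp only [Finset.mem_filter, Finset.mem_univ, true_and]

lemma comm_single (n : ℕ) (X : Finset (Fin n)) :
    downMap n (upMap n (Finsupp.single X (1:ℂ))) =
      upMap n (downMap n (Finsupp.single X (1:ℂ)))
        + ((n : ℂ) - 2 * X.card) • Finsupp.single X (1:ℂ) := by
  ext Z
  rw [up_single, down_single, down_apply_sum, Finsupp.add_apply, Finsupp.smul_apply,
    up_apply_sum, Finset.filter_filter, Finset.filter_filter, Finsupp.single_apply,
    key n X Z]
  simp [smul_eq_mul]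

lemma comm_gen (n k : ℕ) (f : V n) (hf : f ∈ rankSubmodule n k) :
    downMap n (upMap n f) = upMap n (downMap n f) + ((n : ℂ) - 2 * k) • f := by
  have hsupp := (Finsupp.mem_supported ℂ f).1 hf
  have hrep : f = ∑ X ∈ f.support, (f X) • Finsupp.single X (1:ℂ) := by
    conv_lhs => rw [← Finsupp.sum_single f]
    rw [Finsupp.sum]
    apply Finset.sum_congr rfl
    intro X _
    rw [Finsupp.smul_single', mul_one]
  conv_lhs => rw [hrep]
  conv_rhs => rw [hrep]
  rw [map_sum, map_sum, map_sum, map_sum, Finset.smul_sum, ← Finset.sum_add_distrib]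
  apply Finset.sum_congr rfl
  intro X hX
  have hXk : X.card = k := hsupp hX
  rw [map_smul, map_smul, map_smul, map_smul, comm_single, hXk, smul_add,
    smul_comm ((n : ℂ) - 2 * k) (f X)]

lemma down_mem (n k : ℕ) (f : V n) (hf : f ∈ rankSubmodule n (k + 1)) :
    downMap n f ∈ rankSubmodule n k := by
  have hsupp := (Finsupp.mem_supported ℂ f).1 hf
  have hrep : f = ∑ X ∈ f.support, (f X) • Finsupp.single X (1:ℂ) := by
    conv_lhs => rw [← Finsupp.sum_single f]
    rw [Finsupp.sum]
    exact Finset.sum_congr rfl fun X _ => by rw [Finsupp.smul_single', mul_one]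
  rw [hrep, map_sum]
  apply Submodule.sum_mem
  intro X hX
  have hXk : X.card = k + 1 := hsupp hX
  rw [map_smul]
  apply Submodule.smul_mem
  rw [down_single]
  apply Submodule.sum_mem
  intro Y hY
  rw [Finset.mem_filter] at hY
  exact Finsupp.single_mem_supported ℂ 1 (by simp only [Set.mem_setOf_eq]; omega)

lemma down_zero (n : ℕ) (f : V n) (hf : f ∈ rankSubmodule n 0) :
    downMap n f = 0 := by
  have hsupp := (Finsupp.mem_supported ℂ f).1 hf
  have hrep : f = ∑ X ∈ f.support, (f X) • Finsupp.single X (1:ℂ) := by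
    conv_lhs => rw [← Finsupp.sum_single f]
    rw [Finsupp.sum]
    exact Finset.sum_congr rfl fun X _ => by rw [Finsupp.smul_single', mul_one]
  rw [hrep, map_sum]
  apply Finset.sum_eq_zero
  intro X hX
  have hXk : X.card = 0 := hsupp hX
  rw [map_smul, down_single]
  have : Finset.univ.filter (fun Y : Finset (Fin n) => Y ⊆ X ∧ Y.card + 1 = X.card) = ∅ :=
    Finset.filter_eq_empty_iff.2 (by rintro Y _ ⟨_, h⟩; omega)
  rw [this, Finset.sum_empty, smul_zero]

lemma eig (n : ℕ) : ∀ k, 2 * k ≤ n → ∀ f : V n, f ∈ rankSubmodule n k → f ≠ 0 →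
    ∀ r : ℝ, downMap n (upMap n f) = ((r : ℂ)) • f → (n : ℝ) - 2 * k ≤ r := by
  intro k
  induction k with
  | zero =>
    intro _ f hf hf0 r hr
    have hD : downMap n f = 0 := down_zero n f hf
    have hc := comm_gen n 0 f hf
    rw [hD, map_zero, zero_add, hr] at hc
    have : ((r : ℂ) - ((n : ℂ) - 2 * (0:ℕ))) • f = 0 := by
      rw [sub_smul, hc, sub_self]
    rcases smul_eq_zero.1 this with h | h
    · have : (r : ℂ) = (n : ℂ) - 2 * (0:ℕ) := by linear_combination h
      simp only [Nat.cast_zero, mul_zero, sub_zero] at this ⊢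
      exact le_of_eq (by exact_mod_cast this.symm)
    · exact absurd h hf0
  | succ j ih =>
    intro hkn f hf hf0 r hr
    have hc := comm_gen n (j + 1) f hf
    rw [hr] at hc
    have hUD : upMap n (downMap n f) = ((r : ℂ) - ((n : ℂ) - 2 * (j+1 : ℕ))) • f := by
      rw [sub_smul, hc]; abel
    by_cases hD : downMap n f = 0
    · rw [hD, map_zero] at hUD
      rcases smul_eq_zero.1 hUD.symm with h | h
      · have : (r : ℂ) = (n : ℂ) - 2 * (j+1 : ℕ) := by linear_combination h
        have : r = (n : ℝ) - 2 * (j+1 : ℕ) := by exact_mod_cast this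
        push_cast at this ⊢
        linarith
      · exact absurd h hf0
    · have hDmem : downMap n f ∈ rankSubmodule n j := down_mem n j f hf
      have hstep : downMap n (upMap n (downMap n f))
          = (((r - ((n : ℝ) - 2 * (j+1 : ℕ))) : ℝ) : ℂ) • downMap n f := by
        rw [hUD, map_smul]
        norm_num
      have hle := ih (by omega) (downMap n f) hDmem hD _ hstep
      have hn : (2 * (j + 1) : ℝ) ≤ n := by exact_mod_cast hkn
      push_cast at hle ⊢
      linarith

end Aux

/-- **Theorem.** For every `n` and every `k` with `2k < n`, the restriction of the
up operator `U` to `V(B(n)_k)` is injective (as a map into `V(B(n)_{k+1})`). -/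
theorem upMap_injOn_lower_half (n k : ℕ) (hk : 2 * k < n) :
    Set.InjOn (upMap n) (rankSubmodule n k : Set (V n)) := by
  intro a ha b hb hab
  have ha' : a ∈ rankSubmodule n k := ha
  have hb' : b ∈ rankSubmodule n k := hb
  have hf : a - b ∈ rankSubmodule n k := sub_mem ha' hb'
  by_contra hne
  have hf0 : a - b ≠ 0 := sub_ne_zero.2 hne
  have hU : upMap n (a - b) = 0 := by rw [map_sub, hab, sub_self]
  have h0 : downMap n (upMap n (a - b)) = (((0:ℝ):ℂ)) • (a - b) := by
    rw [hU, map_zero]; simp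
  have hle := eig n k (le_of_lt hk) (a - b) hf hf0 0 h0
  have h2 : (2 * k : ℝ) < n := by exact_mod_cast hk
  linarith
end

section
/- Let n = 2k be even and let x ∈ V(B(n)_k) be nonzero with U_0(x) = 0, where U_0 is the up operator of V(B(n)). Identify V(B(n)) with the span V(0) in V(B(n+1)) of subsets not containing n+1, and let R : V(0) → V(B(n+1)) be the linear map induced by X ↦ X ∪ {n+1}. Then, with U the up operator of V(B(n+1)): U(x) = R(x), R(x) ≠ 0, and U(R(x)) = 0; consequently (x, R(x)) is a symmetric Jordan chain in V(B(n+1)) (its ranks k and k+1 satisfy k + (k+1) = n+1). -/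
section Aux

variable (n : ℕ)

/-- The embedding `Fin n ↪ Fin (n+1)`. -/
private def emb : Fin n ↪ Fin (n + 1) := ⟨Fin.castSucc, Fin.castSucc_injective n⟩

variable {n}

private lemma last_not_mem_map (X : Finset (Fin n)) : Fin.last n ∉ X.map (emb n) := by
  simp only [Finset.mem_map, emb]
  rintro ⟨a, -, ha⟩
  exact (Fin.castSucc_lt_last a).ne ha

private lemma mapE_injective : Function.Injective (fun X : Finset (Fin n) => X.map (emb n)) :=
  Finset.map_injective (emb n)

private lemma barFun_injective :
    Function.Injective (fun X : Finset (Fin n) => insert (Fin.last n) (X.map (emb n))) := by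
  intro A B h
  simp only at h
  have h2 : (insert (Fin.last n) (A.map (emb n))).erase (Fin.last n)
      = (insert (Fin.last n) (B.map (emb n))).erase (Fin.last n) := by rw [h]
  rw [Finset.erase_insert (last_not_mem_map A), Finset.erase_insert (last_not_mem_map B)] at h2
  exact mapE_injective h2

private lemma exists_map_of_last_not_mem {Y : Finset (Fin (n + 1))} (h : Fin.last n ∉ Y) :
    ∃ Y₀ : Finset (Fin n), Y = Y₀.map (emb n) := by
  have hsub : Y ⊆ Finset.univ.map (emb n) := by
    intro y hy
    obtain ⟨z, rfl⟩ := Fin.exists_castSucc_eq.mpr (fun hl => h (hl ▸ hy))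
    simp [emb]
  obtain ⟨u, -, rfl⟩ := Finset.subset_map_iff.mp hsub
  exact ⟨u, rfl⟩

private lemma upMap_single (X : Finset (Fin n)) (c : ℂ) :
    upMap n (Finsupp.single X c) =
      c • ∑ Y ∈ Finset.univ.filter
          (fun Y : Finset (Fin n) => X ⊆ Y ∧ Y.card = X.card + 1),
        Finsupp.single Y (1 : ℂ) := by
  simp [upMap, Finsupp.lift_apply, Finsupp.sum_single_index]

private lemma inclMap_single (X : Finset (Fin n)) (c : ℂ) :
    inclMap n (Finsupp.single X c) = Finsupp.single (X.map (emb n)) c := by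
  simp [inclMap, Finsupp.lmapDomain_apply, Finsupp.mapDomain_single, emb]

private lemma barMap_single (X : Finset (Fin n)) (c : ℂ) :
    barMap n (Finsupp.single X c)
      = Finsupp.single (insert (Fin.last n) (X.map (emb n))) c := by
  simp [barMap, Finsupp.lmapDomain_apply, Finsupp.mapDomain_single, emb]

private def mapEmb : Finset (Fin n) ↪ Finset (Fin (n + 1)) :=
  ⟨fun X => X.map (emb n), mapE_injective⟩

private def barEmb : Finset (Fin n) ↪ Finset (Fin (n + 1)) :=
  ⟨fun X => insert (Fin.last n) (X.map (emb n)), barFun_injective⟩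

private lemma setA (X : Finset (Fin n)) :
    Finset.univ.filter
        (fun Y : Finset (Fin (n + 1)) => X.map (emb n) ⊆ Y ∧ Y.card = (X.map (emb n)).card + 1)
      = insert (insert (Fin.last n) (X.map (emb n)))
          ((Finset.univ.filter
            (fun Y₀ : Finset (Fin n) => X ⊆ Y₀ ∧ Y₀.card = X.card + 1)).map mapEmb) := by
  ext Y
  simp only [Finset.mem_filter, Finset.mem_univ, true_and, Finset.mem_insert, Finset.mem_map,
    Finset.card_map, mapEmb, Function.Embedding.coeFn_mk]
  constructor
  · rintro ⟨hsub, hcard⟩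
    by_cases hl : Fin.last n ∈ Y
    · left
      have h1 : insert (Fin.last n) (X.map (emb n)) ⊆ Y :=
        Finset.insert_subset hl hsub
      have h2 : (insert (Fin.last n) (X.map (emb n))).card = X.card + 1 := by
        rw [Finset.card_insert_of_notMem (last_not_mem_map X), Finset.card_map]
      exact (Finset.eq_of_subset_of_card_le h1 (by omega)).symm
    · right
      obtain ⟨Y₀, rfl⟩ := exists_map_of_last_not_mem hl
      refine ⟨Y₀, ⟨(Finset.map_subset_map).mp hsub, ?_⟩, rfl⟩
      rw [Finset.card_map] at hcard
      omega
  · rintro (rfl | ⟨Y₀, ⟨hsub, hcard⟩, rfl⟩)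
    · refine ⟨Finset.subset_insert _ _, ?_⟩
      rw [Finset.card_insert_of_notMem (last_not_mem_map X), Finset.card_map]
    · exact ⟨Finset.map_subset_map.mpr hsub, by simp [hcard]⟩

private lemma setB (X : Finset (Fin n)) :
    Finset.univ.filter
        (fun Y : Finset (Fin (n + 1)) => insert (Fin.last n) (X.map (emb n)) ⊆ Y ∧
          Y.card = (insert (Fin.last n) (X.map (emb n))).card + 1)
      = (Finset.univ.filter
          (fun Y₀ : Finset (Fin n) => X ⊆ Y₀ ∧ Y₀.card = X.card + 1)).map barEmb := by
  have hcardins : (insert (Fin.last n) (X.map (emb n))).card = X.card + 1 := by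
    rw [Finset.card_insert_of_notMem (last_not_mem_map X), Finset.card_map]
  ext Y
  simp only [Finset.mem_filter, Finset.mem_univ, true_and, Finset.mem_map, barEmb,
    Function.Embedding.coeFn_mk, hcardins]
  constructor
  · rintro ⟨hsub, hcard⟩
    have hl : Fin.last n ∈ Y := hsub (Finset.mem_insert_self _ _)
    have hl' : Fin.last n ∉ Y.erase (Fin.last n) := Finset.notMem_erase _ _
    obtain ⟨Y₀, hY₀⟩ := exists_map_of_last_not_mem hl'
    have hYeq : Y = insert (Fin.last n) (Y₀.map (emb n)) := by
      rw [← hY₀, Finset.insert_erase hl]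
    refine ⟨Y₀, ⟨?_, ?_⟩, hYeq.symm⟩
    · apply Finset.map_subset_map.mp
      show X.map (emb n) ⊆ Y₀.map (emb n)
      rw [← hY₀]
      intro y hy
      have hyY : y ∈ Y := hsub (Finset.mem_insert_of_mem hy)
      exact Finset.mem_erase.mpr ⟨fun h => last_not_mem_map X (h ▸ hy), hyY⟩
    · have : Y.card = Y₀.card + 1 := by
        rw [hYeq, Finset.card_insert_of_notMem (last_not_mem_map Y₀), Finset.card_map]
      omega
  · rintro ⟨Y₀, ⟨hsub, hcard⟩, rfl⟩
    refine ⟨Finset.insert_subset_insert _ (Finset.map_subset_map.mpr hsub), ?_⟩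
    rw [Finset.card_insert_of_notMem (last_not_mem_map Y₀), Finset.card_map, hcard]

private lemma up_incl_eq (x : V n) :
    upMap (n + 1) (inclMap n x) = inclMap n (upMap n x) + barMap n x := by
  have h : (upMap (n + 1)).comp (inclMap n) = (inclMap n).comp (upMap n) + barMap n := by
    apply Finsupp.lhom_ext
    intro X c
    simp only [LinearMap.comp_apply, LinearMap.add_apply]
    have hins : insert (Fin.last n) (X.map (emb n)) ∉
        (Finset.univ.filter
          (fun Y₀ : Finset (Fin n) => X ⊆ Y₀ ∧ Y₀.card = X.card + 1)).map mapEmb := by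
      simp only [Finset.mem_map, mapEmb, Function.Embedding.coeFn_mk]
      rintro ⟨Y₀, -, hY⟩
      exact last_not_mem_map Y₀ (by rw [hY]; exact Finset.mem_insert_self _ _)
    rw [inclMap_single, upMap_single, upMap_single, barMap_single, setA,
      Finset.sum_insert hins, map_smul, map_sum]
    simp only [Finset.sum_map, mapEmb, Function.Embedding.coeFn_mk, inclMap_single]
    rw [smul_add, Finsupp.smul_single, smul_eq_mul, mul_one]
    exact add_comm _ _
  simpa using LinearMap.congr_fun h x

private lemma up_bar_eq (x : V n) :
    upMap (n + 1) (barMap n x) = barMap n (upMap n x) := by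
  have h : (upMap (n + 1)).comp (barMap n) = (barMap n).comp (upMap n) := by
    apply Finsupp.lhom_ext
    intro X c
    simp only [LinearMap.comp_apply]
    rw [barMap_single, upMap_single, upMap_single, setB, map_smul, map_sum, Finset.sum_map]
    simp only [barEmb, Function.Embedding.coeFn_mk, barMap_single]
  exact LinearMap.congr_fun h x

end Aux

/-- **Theorem.** Let `n = 2k` and let `x ∈ V(B(n)_k)` be nonzero with `U₀(x) = 0`.
Identifying `V(B(n))` with `V(0) ⊆ V(B(n+1))` and writing `R` for the map induced by
`X ↦ X ∪ {n+1}`, one has `U(x) = R(x)`, `R(x) ≠ 0`, `U(R(x)) = 0`; consequently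
`(x, R(x))` is a symmetric Jordan chain in `V(B(n+1))` (with ranks `k` and `k+1`,
`k + (k+1) = n+1`). -/
theorem sjc_of_middle_kernel (n k : ℕ) (hn : n = 2 * k) (x : V n)
    (hx : x ∈ rankSubmodule n k) (hx0 : x ≠ 0) (hker : upMap n x = 0) :
    upMap (n + 1) (inclMap n x) = barMap n x ∧
    barMap n x ≠ 0 ∧
    upMap (n + 1) (barMap n x) = 0 ∧
    IsSJC (n + 1) k 2 (fun i => if i = 0 then inclMap n x else barMap n x) := by
  have hA : upMap (n + 1) (inclMap n x) = barMap n x := by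
    rw [up_incl_eq, hker, map_zero, zero_add]
  have hBne : barMap n x ≠ 0 := by
    intro h
    apply hx0
    have hinj : Function.Injective (barMap n) := by
      simp only [barMap, Finsupp.lmapDomain_apply]
      exact fun a b hab => Finsupp.mapDomain_injective barFun_injective hab
    exact hinj (by simpa using h)
  have hIne : inclMap n x ≠ 0 := by
    intro h
    apply hx0
    have hinj : Function.Injective (inclMap n) := by
      simp only [inclMap, Finsupp.lmapDomain_apply]
      exact fun a b hab => Finsupp.mapDomain_injective mapE_injective hab
    exact hinj (by simpa using h)
  have hUB : upMap (n + 1) (barMap n x) = 0 := by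
    rw [up_bar_eq, hker, map_zero]
  rw [rankSubmodule, Finsupp.mem_supported] at hx
  have hxsupp : ∀ X ∈ x.support, X.card = k := fun X hX => hx hX
  have hImem : inclMap n x ∈ rankSubmodule (n + 1) k := by
    rw [rankSubmodule, Finsupp.mem_supported]
    intro Y hY
    rw [Finset.mem_coe] at hY
    have h1 : Y ∈ x.support.image (fun X : Finset (Fin n) => X.map (emb n)) := by
      apply Finsupp.mapDomain_support
      exact hY
    obtain ⟨X, hX, rfl⟩ := Finset.mem_image.mp h1
    show (X.map (emb n)).card = k
    rw [Finset.card_map]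
    exact hxsupp X hX
  have hBmem : barMap n x ∈ rankSubmodule (n + 1) (k + 1) := by
    rw [rankSubmodule, Finsupp.mem_supported]
    intro Y hY
    rw [Finset.mem_coe] at hY
    have h1 : Y ∈ x.support.image
        (fun X : Finset (Fin n) => insert (Fin.last n) (X.map (emb n))) := by
      apply Finsupp.mapDomain_support
      exact hY
    obtain ⟨X, hX, rfl⟩ := Finset.mem_image.mp h1
    show (insert (Fin.last n) (X.map (emb n))).card = k + 1
    rw [Finset.card_insert_of_notMem (last_not_mem_map X), Finset.card_map, hxsupp X hX]
  refine ⟨hA, hBne, hUB, one_le_two, ?_, ?_, ?_, ?_⟩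
  · intro i hi
    interval_cases i
    · simpa using ⟨hIne, hImem⟩
    · simpa using ⟨hBne, hBmem⟩
  · intro i hi
    have hi0 : i = 0 := by omega
    subst hi0
    simpa using hA
  · simpa using hUB
  · omega
end
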